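/- Let G be a group acting on the right on a set X with basepoint x₀ whose orbit x₀·G is infinite, and let S generate G as a monoid. Then the inverted orbit growth function Δ(n) = max{δ(w) : |w| = n} satisfies Δ(n(n-1)/2) ≥ n for all n ≥ 1; in particular Δ(n) ≳ √n. -/

import Mathlib

open Classical in
/-- The size `δ(w)` of the inverted orbit of the word `w`, for a right action
`act` of `G` on `X` and basepoint `x₀`. -/
noncomputable def invOrbSize {G X : Type*} [Group G] (act : X → G → X) (x₀ : X)
    (w : List G) : ℕ :=
  ((Finset.range (w.length + 1)).image fun i => act x₀ ((w.drop i).prod)).card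

/-- The inverted orbit growth function `Δ(n)`, the supremum of `δ(w)` over
words `w` of length `n` with letters in `S`. -/
noncomputable def invOrbGrowth {G X : Type*} [Group G] (act : X → G → X) (x₀ : X)
    (S : Set G) (n : ℕ) : ℕ :=
  sSup {k | ∃ w : List G, (∀ g ∈ w, g ∈ S) ∧ w.length = n ∧ k = invOrbSize act x₀ w}

section Aux

variable {G X : Type*} [Group G]

/-- Points reachable from `x₀` by words over `S` of length at most `m`. -/
def reachSet (act : X → G → X) (S : Set G) (x₀ : X) (m : ℕ) : Set X :=
  {x | ∃ v : List G, (∀ g ∈ v, g ∈ S) ∧ v.length ≤ m ∧ x = act x₀ v.prod}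

lemma reachSet_mono (act : X → G → X) (S : Set G) (x₀ : X) {m m' : ℕ} (h : m ≤ m') :
    reachSet act S x₀ m ⊆ reachSet act S x₀ m' := by
  rintro x ⟨v, hv, hl, hx⟩
  exact ⟨v, hv, hl.trans h, hx⟩

lemma reachSet_stab (act : X → G → X)
    (hm : ∀ x g g', act (act x g) g' = act x (g * g'))
    (S : Set G) (x₀ : X) (m : ℕ)
    (hstab : reachSet act S x₀ (m + 1) ⊆ reachSet act S x₀ m) :
    ∀ j, reachSet act S x₀ j ⊆ reachSet act S x₀ m := by
  intro j
  induction j with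
  | zero => exact reachSet_mono act S x₀ (Nat.zero_le m)
  | succ j ih =>
    rintro x ⟨v, hv, hl, rfl⟩
    by_cases hvm : v.length ≤ m
    · exact ⟨v, hv, hvm, rfl⟩
    · have hvne : v ≠ [] := by
        intro h; subst h; simp at hvm
      have hdl : v.dropLast.length ≤ j := by
        have : v.dropLast.length = v.length - 1 := List.length_dropLast
        omega
      have hmem : act x₀ v.dropLast.prod ∈ reachSet act S x₀ m :=
        ih ⟨v.dropLast, fun g hg => hv g (List.mem_of_mem_dropLast hg), hdl, rfl⟩
      obtain ⟨u, hu, hul, hueq⟩ := hmem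
      have hlast : v.getLast hvne ∈ S := hv _ (List.getLast_mem hvne)
      apply hstab
      refine ⟨u ++ [v.getLast hvne], ?_, ?_, ?_⟩
      · intro g hg
        rcases List.mem_append.1 hg with h | h
        · exact hu g h
        · simp at h; subst h; exact hlast
      · simp; omega
      · have hp : v.prod = v.dropLast.prod * v.getLast hvne := by
          conv_lhs => rw [← List.dropLast_append_getLast hvne]
          simp [List.prod_append]
        rw [hp]
        simp only [List.prod_append, List.prod_cons, List.prod_nil, mul_one]
        rw [← hm, ← hm, hueq]

/-- Escape lemma: from `x₀` one can reach a point outside any finite set `F`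
using a word of length at most `F.card`. -/
lemma reach_escape (act : X → G → X)
    (h1 : ∀ x, act x 1 = x) (hm : ∀ x g g', act (act x g) g' = act x (g * g'))
    (S : Set G) (hS : Submonoid.closure S = ⊤) (x₀ : X)
    (hinf : Set.Infinite (Set.range fun g : G => act x₀ g)) (F : Finset X) :
    ∃ v : List G, (∀ g ∈ v, g ∈ S) ∧ v.length ≤ F.card ∧ act x₀ v.prod ∉ F := by
  by_contra hcon
  push_neg at hcon
  have hQF : ∀ j ≤ F.card, reachSet act S x₀ j ⊆ ↑F := by
    rintro j hj x ⟨v, hv, hl, rfl⟩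
    exact hcon v hv (hl.trans hj)
  by_cases hstab : ∃ j < F.card, reachSet act S x₀ (j + 1) ⊆ reachSet act S x₀ j
  · obtain ⟨j, hj, hs⟩ := hstab
    have hrange : (Set.range fun g : G => act x₀ g) ⊆ reachSet act S x₀ j := by
      rintro x ⟨g, rfl⟩
      have hg : g ∈ Submonoid.closure S := by rw [hS]; exact Submonoid.mem_top g
      obtain ⟨l, hl, hlp⟩ := Submonoid.exists_list_of_mem_closure hg
      exact reachSet_stab act hm S x₀ j hs l.length ⟨l, hl, le_rfl, by rw [hlp]⟩
    exact hinf (Set.Finite.subset F.finite_toSet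
      (hrange.trans (hQF j hj.le)))
  · push_neg at hstab
    have hfin : ∀ j ≤ F.card, (reachSet act S x₀ j).Finite :=
      fun j hj => Set.Finite.subset F.finite_toSet (hQF j hj)
    have hcard : ∀ j ≤ F.card, j + 1 ≤ (reachSet act S x₀ j).ncard := by
      intro j
      induction j with
      | zero =>
        intro _
        have hne : (reachSet act S x₀ 0).Nonempty :=
          ⟨x₀, ⟨[], by simp, by simp, by simp [h1]⟩⟩
        have := (Set.ncard_pos (hfin 0 (Nat.zero_le _))).2 hne
        omega
      | succ j ih =>
        intro hj
        have hss : reachSet act S x₀ j ⊂ reachSet act S x₀ (j + 1) :=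
          lt_of_le_not_ge (reachSet_mono act S x₀ (Nat.le_succ j)) (hstab j (by omega))
        have := Set.ncard_lt_ncard hss (hfin (j + 1) hj)
        have := ih (by omega)
        omega
    have h1' := hcard F.card le_rfl
    have h2' : (reachSet act S x₀ F.card).ncard ≤ F.card := by
      have := Set.ncard_le_ncard (hQF F.card le_rfl) F.finite_toSet
      simpa using this
    omega

open Classical in
lemma invOrbSize_prepend_le (act : X → G → X) (x₀ : X) (p w : List G) :
    invOrbSize act x₀ w ≤ invOrbSize act x₀ (p ++ w) := by
  unfold invOrbSize
  apply Finset.card_le_card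
  intro x hx
  rw [Finset.mem_image] at hx ⊢
  obtain ⟨i, hi, rfl⟩ := hx
  rw [Finset.mem_range] at hi
  refine ⟨p.length + i, ?_, ?_⟩
  · rw [Finset.mem_range, List.length_append]; omega
  · rw [List.drop_append]; simp [List.drop_eq_nil_of_le (Nat.le_add_right _ _)]

open Classical in
lemma invOrbSize_le (act : X → G → X) (x₀ : X) (w : List G) :
    invOrbSize act x₀ w ≤ w.length + 1 := by
  unfold invOrbSize
  exact (Finset.card_image_le).trans (by simp)

end Aux

section Main

variable {G X : Type*} [Group G]

open Classical in
/-- The key inductive construction. -/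
lemma exists_good_word (act : X → G → X)
    (h1 : ∀ x, act x 1 = x) (hm : ∀ x g g', act (act x g) g' = act x (g * g'))
    (S : Set G) (hS : Submonoid.closure S = ⊤) (x₀ : X)
    (hinf : Set.Infinite (Set.range fun g : G => act x₀ g)) :
    ∀ n : ℕ, 1 ≤ n → ∃ w : List G, (∀ g ∈ w, g ∈ S) ∧
      w.length ≤ n * (n - 1) / 2 ∧ n ≤ invOrbSize act x₀ w := by
  have tri : ∀ n : ℕ, 1 ≤ n → n * (n - 1) / 2 + n = (n + 1) * ((n + 1) - 1) / 2 := by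
    intro n hn
    obtain ⟨m, rfl⟩ := Nat.exists_eq_add_of_le hn
    obtain ⟨a, ha⟩ := Nat.even_mul_succ_self m
    obtain ⟨b, hb⟩ := Nat.even_mul_succ_self (m + 1)
    have hs1 : 1 + m - 1 = m := by omega
    have hs2 : 1 + m + 1 - 1 = m + 1 := by omega
    have h2 : (1 + m) * (1 + m - 1) = a + a := by
      rw [hs1, show (1 + m) * m = m * (m + 1) from by ring, ha]
    have h3 : (1 + m + 1) * (1 + m + 1 - 1) = b + b := by
      rw [hs2, show (1 + m + 1) * (m + 1) = (m + 1) * (m + 1 + 1) from by ring, hb]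
    have hab : b + b = a + a + 2 * (m + 1) := by
      rw [← hb, ← ha]; ring
    rw [h2, h3]
    omega
  intro n hn
  induction n with
  | zero => omega
  | succ n ih =>
    by_cases hn1 : n = 0
    · subst hn1
      refine ⟨[], by simp, by simp, ?_⟩
      unfold invOrbSize
      simp
    · have hn' : 1 ≤ n := by omega
      obtain ⟨w, hwS, hwl, hwc⟩ := ih hn'
      by_cases hbig : n + 1 ≤ invOrbSize act x₀ w
      · refine ⟨w, hwS, ?_, hbig⟩
        have := tri n hn'
        omega
      · -- invOrbSize w = n exactly
        push_neg at hbig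
        set F : Finset X :=
          (Finset.range (w.length + 1)).image fun i => act x₀ ((w.drop i).prod) with hF
        have hFcard : F.card = n := by
          have : invOrbSize act x₀ w = F.card := rfl
          omega
        set F' : Finset X := F.image fun y => act y (w.prod)⁻¹ with hF'
        have hF'card : F'.card ≤ n := by
          rw [hF']
          exact (Finset.card_image_le).trans_eq hFcard
        obtain ⟨v, hvS, hvl, hvnot⟩ :=
          reach_escape act h1 hm S hS x₀ hinf F'
        refine ⟨v ++ w, ?_, ?_, ?_⟩
        · intro g hg
          rcases List.mem_append.1 hg with h | h
          · exact hvS g h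
          · exact hwS g h
        · rw [List.length_append]
          have := tri n hn'
          omega
        · -- new point
          have hynotF : act x₀ ((v ++ w).prod) ∉ F := by
            intro hy
            apply hvnot
            rw [hF', Finset.mem_image]
            refine ⟨act x₀ ((v ++ w).prod), hy, ?_⟩
            rw [hm, List.prod_append, mul_inv_cancel_right]
          unfold invOrbSize
          have hsub : insert (act x₀ ((v ++ w).prod)) F ⊆
              (Finset.range ((v ++ w).length + 1)).image
                fun i => act x₀ (((v ++ w).drop i).prod) := by
            intro x hx
            rcases Finset.mem_insert.1 hx with rfl | hx
            · rw [Finset.mem_image]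
              exact ⟨0, by simp, by simp⟩
            · rw [hF, Finset.mem_image] at hx
              obtain ⟨i, hi, rfl⟩ := hx
              rw [Finset.mem_range] at hi
              rw [Finset.mem_image]
              refine ⟨v.length + i, ?_, ?_⟩
              · rw [Finset.mem_range, List.length_append]; omega
              · rw [List.drop_append]; simp [List.drop_eq_nil_of_le (Nat.le_add_right _ _)]
          calc n + 1 = F.card + 1 := by omega
            _ = (insert (act x₀ ((v ++ w).prod)) F).card :=
                (Finset.card_insert_of_notMem hynotF).symm
            _ ≤ _ := Finset.card_le_card hsub

end Main

/-- If the orbit of the basepoint `x₀` is infinite, then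
`Δ(n(n-1)/2) ≥ n` for all `n ≥ 1`; in particular `Δ(n) ≳ √n`. -/
theorem invOrbGrowth_lower_bound {G X : Type*} [Group G] (act : X → G → X)
    (h1 : ∀ x, act x 1 = x) (hm : ∀ x g g', act (act x g) g' = act x (g * g'))
    (S : Set G) (hS : Submonoid.closure S = ⊤) (x₀ : X)
    (hinf : Set.Infinite (Set.range fun g : G => act x₀ g)) :
    ∀ n : ℕ, 1 ≤ n → n ≤ invOrbGrowth act x₀ S (n * (n - 1) / 2) := by
  intro n hn
  have hSne : S.Nonempty := by
    rcases Set.eq_empty_or_nonempty S with h | h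
    · exfalso
      subst h
      rw [Submonoid.closure_empty] at hS
      have hone : ∀ g : G, g = 1 := by
        intro g
        have : g ∈ (⊤ : Submonoid G) := Submonoid.mem_top g
        rw [← hS] at this
        exact Submonoid.mem_bot.1 this
      apply hinf
      apply Set.Finite.subset (Set.finite_singleton (act x₀ (1 : G)))
      rintro x ⟨g, rfl⟩
      simp [hone g]
    · exact h
  obtain ⟨s₀, hs₀⟩ := hSne
  obtain ⟨w, hwS, hwl, hwc⟩ := exists_good_word act h1 hm S hS x₀ hinf n hn
  set N := n * (n - 1) / 2 with hN
  set w' : List G := List.replicate (N - w.length) s₀ ++ w with hw'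
  have hw'S : ∀ g ∈ w', g ∈ S := by
    intro g hg
    rcases List.mem_append.1 hg with h | h
    · rw [List.eq_of_mem_replicate h]; exact hs₀
    · exact hwS g h
  have hw'len : w'.length = N := by
    rw [hw', List.length_append, List.length_replicate]
    omega
  have hw'size : n ≤ invOrbSize act x₀ w' :=
    hwc.trans (invOrbSize_prepend_le act x₀ _ w)
  have hmem : invOrbSize act x₀ w' ∈
      {k | ∃ w : List G, (∀ g ∈ w, g ∈ S) ∧ w.length = N ∧ k = invOrbSize act x₀ w} :=
    ⟨w', hw'S, hw'len, rfl⟩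
  have hbdd : BddAbove
      {k | ∃ w : List G, (∀ g ∈ w, g ∈ S) ∧ w.length = N ∧ k = invOrbSize act x₀ w} := by
    refine ⟨N + 1, ?_⟩
    rintro k ⟨u, _, hul, rfl⟩
    have := invOrbSize_le act x₀ u
    omega
  exact hw'size.trans (le_csSup hbdd hmem)
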